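/- (Case 1, exact count for disjoint circles.) Let A, B ∈ EuclideanSpace ℝ (Fin 2) and r₁ > 0, r₂ > 0 with dist A B > r₁ + r₂. Then the set of lines (one-dimensional affine subspaces ℓ of the plane) satisfying Metric.infDist A ℓ = r₁ and Metric.infDist B ℓ = r₂ has exactly 4 elements (two external and two internal common tangents). -/

import Mathlib

open scoped RealInnerProductSpace

noncomputable section TangentAux

abbrev V2 := EuclideanSpace ℝ (Fin 2)

/-- The line `{x | ⟪n, x⟫ = c}` as an affine subspace. -/
def mkLine (n : V2) (c : ℝ) : AffineSubspace ℝ V2 where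
  carrier := {x | ⟪n, x⟫ = c}
  smul_vsub_vadd_mem' := by
    intro r x y z hx hy hz
    simp only [Set.mem_setOf_eq] at *
    simp [vadd_eq_add, vsub_eq_sub, inner_add_right, inner_sub_right, inner_smul_right,
      hx, hy, hz]

lemma mem_mkLine_iff {n : V2} {c : ℝ} {x : V2} : x ∈ mkLine n c ↔ ⟪n, x⟫ = c := Iff.rfl

lemma mkLine_neg (n : V2) (c : ℝ) : mkLine (-n) (-c) = mkLine n c := by
  ext x
  simp [mem_mkLine_iff, inner_neg_left, neg_eq_iff_eq_neg, eq_comm]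

lemma smul_mem_mkLine {n : V2} (hn : ‖n‖ = 1) (c : ℝ) : c • n ∈ mkLine n c := by
  rw [mem_mkLine_iff, inner_smul_right, real_inner_self_eq_norm_sq, hn]
  ring

lemma direction_mkLine {n : V2} (hn : n ≠ 0) (c : ℝ) :
    (mkLine n c).direction = (Submodule.span ℝ {n})ᗮ := by
  have hnn : ⟪n, n⟫ ≠ 0 := by
    rw [real_inner_self_eq_norm_sq]
    exact pow_ne_zero 2 (norm_ne_zero_iff.2 hn)
  have hp0 : (⟪n, n⟫)⁻¹ • (c • n) ∈ mkLine n c := by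
    rw [mem_mkLine_iff, inner_smul_right, inner_smul_right]
    rw [mul_comm c, ← mul_assoc, inv_mul_cancel₀ hnn, one_mul]
  apply le_antisymm
  · rw [AffineSubspace.direction_eq_vectorSpan, vectorSpan_def, Submodule.span_le]
    rintro v ⟨x, hx, y, hy, rfl⟩
    simp only [SetLike.mem_coe]
    rw [Submodule.mem_orthogonal]
    intro u hu
    obtain ⟨a, rfl⟩ := Submodule.mem_span_singleton.1 hu
    rw [AffineSubspace.mem_coe, mem_mkLine_iff] at hx hy
    show ⟪a • n, x -ᵥ y⟫ = 0
    rw [real_inner_smul_left, vsub_eq_sub, inner_sub_right, hx, hy]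
    ring
  · intro v hv
    have h0 : ⟪n, v⟫ = 0 := by
      have h := (Submodule.mem_orthogonal _ _).1 hv n (Submodule.mem_span_singleton_self n)
      exact h
    have h1 : v +ᵥ ((⟪n, n⟫)⁻¹ • (c • n)) ∈ mkLine n c := by
      rw [mem_mkLine_iff] at hp0 ⊢
      rw [show v +ᵥ ((⟪n, n⟫)⁻¹ • (c • n)) = v + (⟪n, n⟫)⁻¹ • (c • n) from rfl,
        inner_add_right, h0, zero_add, hp0]
    have := AffineSubspace.vsub_mem_direction h1 hp0
    simpa using this

lemma finrank_direction_mkLine {n : V2} (hn : n ≠ 0) (c : ℝ) :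
    Module.finrank ℝ (mkLine n c).direction = 1 := by
  rw [direction_mkLine hn c]
  have h := Submodule.finrank_add_finrank_orthogonal (𝕜 := ℝ) (Submodule.span ℝ {n})
  rw [finrank_span_singleton hn, finrank_euclideanSpace, Fintype.card_fin] at h
  omega

lemma infDist_mkLine {n : V2} (hn : ‖n‖ = 1) (c : ℝ) (P : V2) :
    Metric.infDist P ((mkLine n c : AffineSubspace ℝ V2) : Set V2) = |⟪n, P⟫ - c| := by
  have hne : n ≠ 0 := by intro h; rw [h] at hn; simp at hn
  set Q : V2 := P - (⟪n, P⟫ - c) • n with hQ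
  have hQmem : Q ∈ mkLine n c := by
    rw [mem_mkLine_iff, hQ, inner_sub_right, inner_smul_right, real_inner_self_eq_norm_sq, hn]
    ring
  apply le_antisymm
  · calc Metric.infDist P ((mkLine n c : AffineSubspace ℝ V2) : Set V2) ≤ dist P Q :=
          Metric.infDist_le_dist_of_mem hQmem
      _ = |⟪n, P⟫ - c| := by
          rw [dist_eq_norm, hQ]
          simp [norm_smul, hn]
  · by_contra hlt
    push_neg at hlt
    obtain ⟨y, hy, hdy⟩ := (Metric.infDist_lt_iff ⟨Q, hQmem⟩).1 hlt
    rw [AffineSubspace.mem_coe, mem_mkLine_iff] at hy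
    have : |⟪n, P⟫ - c| ≤ dist P y := by
      calc |⟪n, P⟫ - c| = |⟪n, P - y⟫| := by rw [inner_sub_right, hy]
        _ ≤ ‖n‖ * ‖P - y‖ := abs_real_inner_le_norm n (P - y)
        _ = dist P y := by rw [hn, one_mul, dist_eq_norm]
    linarith

lemma mkLine_inj {n n' : V2} {c c' : ℝ} (hn : ‖n‖ = 1) (hn' : ‖n'‖ = 1)
    (h : mkLine n c = mkLine n' c') : (n' = n ∧ c' = c) ∨ (n' = -n ∧ c' = -c) := by
  have hne : n ≠ 0 := by intro hh; rw [hh] at hn; simp at hn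
  have hne' : n' ≠ 0 := by intro hh; rw [hh] at hn'; simp at hn'
  have hdir : (Submodule.span ℝ {n})ᗮ = (Submodule.span ℝ {n'})ᗮ := by
    rw [← direction_mkLine hne c, ← direction_mkLine hne' c', h]
  have hspan : Submodule.span ℝ {n} = Submodule.span ℝ {n'} := by
    have := congrArg (fun K : Submodule ℝ V2 => Kᗮ) hdir
    simpa [Submodule.orthogonal_orthogonal] using this
  have hn'mem : n' ∈ Submodule.span ℝ {n} := hspan ▸ Submodule.mem_span_singleton_self n'
  obtain ⟨a, rfl⟩ := Submodule.mem_span_singleton.1 hn'mem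
  have ha : |a| = 1 := by
    have h2 : ‖a • n‖ = |a| * ‖n‖ := by rw [norm_smul, Real.norm_eq_abs]
    rw [hn', hn, mul_one] at h2
    exact h2.symm
  have hcc : c' = a * c := by
    have hmem : c • n ∈ mkLine (a • n) c' := by
      rw [← h]; exact smul_mem_mkLine hn c
    rw [mem_mkLine_iff, inner_smul_left, inner_smul_right, real_inner_self_eq_norm_sq, hn] at hmem
    simp only [RCLike.star_def, starRingEnd_apply, star_trivial] at hmem
    rw [← hmem]; ring
  rcases abs_eq (by norm_num : (0:ℝ) ≤ 1) |>.1 ha with h1 | h1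
  · left; constructor
    · rw [h1, one_smul]
    · rw [hcc, h1, one_mul]
  · right; constructor
    · rw [h1, neg_one_smul]
    · rw [hcc, h1, neg_one_mul]

end TangentAux

noncomputable section TangentAux2
open scoped RealInnerProductSpace

lemma exists_mkLine (ℓ : AffineSubspace ℝ V2) (h : Module.finrank ℝ ℓ.direction = 1) :
    ∃ n c, ‖n‖ = 1 ∧ ℓ = mkLine n c := by
  have h2 : Module.finrank ℝ (ℓ.direction)ᗮ = 1 := by
    have hh := Submodule.finrank_add_finrank_orthogonal (𝕜 := ℝ) ℓ.direction
    rw [h, finrank_euclideanSpace, Fintype.card_fin] at hh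
    omega
  have hbot : (ℓ.direction)ᗮ ≠ ⊥ := by
    intro hb; rw [hb] at h2; simp at h2
  obtain ⟨m, hm, hm0⟩ := Submodule.exists_mem_ne_zero_of_ne_bot hbot
  set n := ‖m‖⁻¹ • m with hn
  have hn1 : ‖n‖ = 1 := by
    rw [hn, norm_smul, norm_inv, norm_norm, inv_mul_cancel₀ (norm_ne_zero_iff.2 hm0)]
  have hn0 : n ≠ 0 := by intro hh; rw [hh] at hn1; simp at hn1
  have hnmem : n ∈ (ℓ.direction)ᗮ := Submodule.smul_mem _ _ hm
  have hne : (ℓ : Set V2).Nonempty := by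
    by_contra he
    rw [Set.not_nonempty_iff_eq_empty, AffineSubspace.coe_eq_bot_iff] at he
    rw [he, AffineSubspace.direction_bot] at h
    simp at h
  obtain ⟨p, hp⟩ := hne
  refine ⟨n, ⟪n, p⟫, hn1, ?_⟩
  apply AffineSubspace.ext_of_direction_eq
  · rw [direction_mkLine hn0]
    have hle : ℓ.direction ≤ (Submodule.span ℝ {n})ᗮ := by
      intro v hv
      rw [Submodule.mem_orthogonal]
      intro x hx
      obtain ⟨a, rfl⟩ := Submodule.mem_span_singleton.1 hx
      rw [real_inner_smul_left]
      have h0 : ⟪v, n⟫ = 0 := (Submodule.mem_orthogonal _ _).1 hnmem v hv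
      rw [real_inner_comm, h0, mul_zero]
    refine Submodule.eq_of_le_of_finrank_eq hle ?_
    rw [h]
    have hh := Submodule.finrank_add_finrank_orthogonal (𝕜 := ℝ) (Submodule.span ℝ {n})
    rw [finrank_span_singleton hn0, finrank_euclideanSpace, Fintype.card_fin] at hh
    omega
  · exact ⟨p, hp, by rw [AffineSubspace.mem_coe, mem_mkLine_iff]⟩

/-- Unit normal with given `u`-component `τ` and nonnegative `w`-component. -/
def tnorm (u w : V2) (τ : ℝ) : V2 := τ • u + Real.sqrt (1 - τ ^ 2) • w

/-- Candidate common tangent line with signed distances `s₁`, `s₂`. -/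
def tline (A u w : V2) (d s₁ s₂ : ℝ) : AffineSubspace ℝ V2 :=
  mkLine (tnorm u w ((s₂ - s₁) / d)) (⟪tnorm u w ((s₂ - s₁) / d), A⟫ - s₁)

section Frame

variable {u w : V2} (hu : ‖u‖ = 1) (hw : ‖w‖ = 1) (huw : ⟪u, w⟫ = 0)

include hu hw huw

lemma inner_u_tnorm (τ : ℝ) : ⟪u, tnorm u w τ⟫ = τ := by
  rw [tnorm, inner_add_right, inner_smul_right, inner_smul_right,
    real_inner_self_eq_norm_sq, hu, huw]
  ring

lemma inner_w_tnorm (τ : ℝ) : ⟪w, tnorm u w τ⟫ = Real.sqrt (1 - τ ^ 2) := by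
  rw [tnorm, inner_add_right, inner_smul_right, inner_smul_right,
    real_inner_self_eq_norm_sq, hw, real_inner_comm, huw]
  ring

lemma norm_tnorm {τ : ℝ} (hτ : τ ^ 2 ≤ 1) : ‖tnorm u w τ‖ = 1 := by
  have hs : Real.sqrt (1 - τ ^ 2) ^ 2 = 1 - τ ^ 2 :=
    Real.sq_sqrt (by linarith)
  have key : ⟪tnorm u w τ, tnorm u w τ⟫ = 1 := by
    simp only [tnorm, inner_add_left, inner_add_right, real_inner_smul_left,
      real_inner_smul_right]
    rw [real_inner_self_eq_norm_sq, real_inner_self_eq_norm_sq, hu, hw, huw,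
      real_inner_comm u w, huw]
    nlinarith [hs]
  rw [norm_eq_sqrt_real_inner, key, Real.sqrt_one]

lemma frame_decomp (hframe : Submodule.span ℝ ({u, w} : Set V2) = ⊤) (n : V2) :
    n = ⟪u, n⟫ • u + ⟪w, n⟫ • w := by
  have hmem : n ∈ Submodule.span ℝ ({u, w} : Set V2) := by rw [hframe]; trivial
  obtain ⟨a, b, hab⟩ := Submodule.mem_span_pair.1 hmem
  have ha : ⟪u, n⟫ = a := by
    rw [← hab, inner_add_right, inner_smul_right, inner_smul_right,
      real_inner_self_eq_norm_sq, hu, huw]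
    ring
  have hb : ⟪w, n⟫ = b := by
    rw [← hab, inner_add_right, inner_smul_right, inner_smul_right,
      real_inner_self_eq_norm_sq, hw, real_inner_comm, huw]
    ring
  rw [ha, hb, hab]

end Frame

end TangentAux2

noncomputable section TangentAux3
open scoped RealInnerProductSpace

lemma tline_spec (A B : V2) {u w : V2} (hu : ‖u‖ = 1) (hw : ‖w‖ = 1) (huw : ⟪u, w⟫ = 0)
    {d : ℝ} (hd : 0 < d) (hBA : B - A = d • u) (s₁ s₂ : ℝ)
    (hτ : ((s₂ - s₁) / d) ^ 2 ≤ 1) :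
    Module.finrank ℝ (tline A u w d s₁ s₂).direction = 1 ∧
    Metric.infDist A ((tline A u w d s₁ s₂ : AffineSubspace ℝ V2) : Set V2) = |s₁| ∧
    Metric.infDist B ((tline A u w d s₁ s₂ : AffineSubspace ℝ V2) : Set V2) = |s₂| := by
  set τ := (s₂ - s₁) / d with hτdef
  set n := tnorm u w τ with hndef
  have hn1 : ‖n‖ = 1 := norm_tnorm hu hw huw hτ
  have hn0 : n ≠ 0 := by intro hh; rw [hh] at hn1; simp at hn1
  have hnB : ⟪n, B⟫ - ⟪n, A⟫ = s₂ - s₁ := by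
    rw [← inner_sub_right, hBA, inner_smul_right, real_inner_comm,
      inner_u_tnorm hu hw huw, hτdef]
    field_simp
  refine ⟨finrank_direction_mkLine hn0 _, ?_, ?_⟩
  · rw [tline, ← hτdef, ← hndef, infDist_mkLine hn1]
    congr 1; ring
  · rw [tline, ← hτdef, ← hndef, infDist_mkLine hn1]
    congr 1; linarith

lemma mkLine_eq_tline {u w : V2} (hu : ‖u‖ = 1) (hw : ‖w‖ = 1) (huw : ⟪u, w⟫ = 0)
    (hframe : Submodule.span ℝ ({u, w} : Set V2) = ⊤)
    (A B : V2) {d : ℝ} (hd : 0 < d) (hBA : B - A = d • u)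
    {n : V2} (c : ℝ) (hn : ‖n‖ = 1) (hβ : 0 ≤ ⟪w, n⟫) :
    mkLine n c = tline A u w d (⟪n, A⟫ - c) (⟪n, B⟫ - c) := by
  set α := ⟪u, n⟫ with hα
  set β := ⟪w, n⟫ with hβdef
  have hdecomp : n = α • u + β • w := frame_decomp hu hw huw hframe n
  have hsum : α ^ 2 + β ^ 2 = 1 := by
    have h1 : ⟪n, n⟫ = 1 := by rw [real_inner_self_eq_norm_sq, hn]; norm_num
    calc α ^ 2 + β ^ 2 = ⟪α • u + β • w, n⟫ := by
          rw [inner_add_left, real_inner_smul_left, real_inner_smul_left, ← hα, ← hβdef]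
          ring
      _ = 1 := by rw [← hdecomp, h1]
  have hdα : d * α = (⟪n, B⟫ - c) - (⟪n, A⟫ - c) := by
    have : ⟪B - A, n⟫ = ⟪n, B⟫ - ⟪n, A⟫ := by
      rw [inner_sub_left, real_inner_comm B n, real_inner_comm A n]
    rw [show ⟪n, B⟫ - c - (⟪n, A⟫ - c) = ⟪n, B⟫ - ⟪n, A⟫ by ring, ← this, hBA,
      real_inner_smul_left, ← hα]
  have hτeq : ((⟪n, B⟫ - c) - (⟪n, A⟫ - c)) / d = α := by
    rw [← hdα]; field_simp
  have hβval : β = Real.sqrt (1 - α ^ 2) := by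
    rw [show 1 - α ^ 2 = β ^ 2 by linarith, Real.sqrt_sq hβ]
  have hneq : tnorm u w (((⟪n, B⟫ - c) - (⟪n, A⟫ - c)) / d) = n := by
    rw [hτeq, tnorm, ← hβval, ← hdecomp]
  rw [tline, hneq]
  congr 1
  ring

lemma tline_inj {u w : V2} (hu : ‖u‖ = 1) (hw : ‖w‖ = 1) (huw : ⟪u, w⟫ = 0)
    (A : V2) {d s₁ s₂ s₁' s₂' : ℝ} (hd : 0 < d)
    (h1 : ((s₂ - s₁) / d) ^ 2 < 1) (h1' : ((s₂' - s₁') / d) ^ 2 < 1)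
    (h : tline A u w d s₁ s₂ = tline A u w d s₁' s₂') : s₁ = s₁' ∧ s₂ = s₂' := by
  set τ := (s₂ - s₁) / d with hτdef
  set τ' := (s₂' - s₁') / d with hτ'def
  have hn1 : ‖tnorm u w τ‖ = 1 := norm_tnorm hu hw huw h1.le
  have hn1' : ‖tnorm u w τ'‖ = 1 := norm_tnorm hu hw huw h1'.le
  rcases mkLine_inj hn1 hn1' h with ⟨hne, hce⟩ | ⟨hne, hce⟩
  · have hττ : τ' = τ := by
      have := congrArg (fun x => ⟪u, x⟫) hne
      simpa [inner_u_tnorm hu hw huw] using this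
    have hs1 : s₁ = s₁' := by
      have h2 : ⟪tnorm u w τ', A⟫ - s₁' = ⟪tnorm u w τ, A⟫ - s₁ := hce
      rw [hττ] at h2
      linarith
    refine ⟨hs1, ?_⟩
    have : (s₂ - s₁) / d = (s₂' - s₁') / d := by rw [← hτdef, ← hτ'def, hττ]
    field_simp at this
    linarith
  · exfalso
    have hpos : (0:ℝ) < Real.sqrt (1 - τ' ^ 2) := Real.sqrt_pos.2 (by linarith)
    have hpos2 : (0:ℝ) < Real.sqrt (1 - τ ^ 2) := Real.sqrt_pos.2 (by linarith)
    have := congrArg (fun x => ⟪w, x⟫) hne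
    simp only [inner_neg_right, inner_w_tnorm hu hw huw] at this
    linarith

end TangentAux3
section Main
open scoped RealInnerProductSpace

/-- Case 1, exact count: for two disjoint circles (centers `A ≠ B` with
`dist A B > r₁ + r₂`, radii `r₁, r₂ > 0`) there are exactly 4 common tangent
lines, i.e. 4 lines at distance `r₁` from `A` and `r₂` from `B`. -/
theorem four_common_tangents (A B : EuclideanSpace ℝ (Fin 2))
    (r₁ r₂ : ℝ) (hr₁ : 0 < r₁) (hr₂ : 0 < r₂) (hsep : dist A B > r₁ + r₂) :
    {ℓ : AffineSubspace ℝ (EuclideanSpace ℝ (Fin 2)) |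
        Module.finrank ℝ ℓ.direction = 1 ∧
        Metric.infDist A (ℓ : Set (EuclideanSpace ℝ (Fin 2))) = r₁ ∧
        Metric.infDist B (ℓ : Set (EuclideanSpace ℝ (Fin 2))) = r₂}.Finite ∧
    {ℓ : AffineSubspace ℝ (EuclideanSpace ℝ (Fin 2)) |
        Module.finrank ℝ ℓ.direction = 1 ∧
        Metric.infDist A (ℓ : Set (EuclideanSpace ℝ (Fin 2))) = r₁ ∧
        Metric.infDist B (ℓ : Set (EuclideanSpace ℝ (Fin 2))) = r₂}.ncard = 4 := by
  have hd : (0:ℝ) < dist A B := lt_trans (by positivity) hsep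
  set d := dist A B with hddef
  set u : V2 := d⁻¹ • (B - A) with hudef
  have hBA : B - A = d • u := by rw [hudef, smul_inv_smul₀ hd.ne']
  have hnormBA : ‖B - A‖ = d := by rw [hddef, dist_eq_norm, norm_sub_rev]
  have hu : ‖u‖ = 1 := by
    rw [hudef, norm_smul, norm_inv, Real.norm_eq_abs, abs_of_pos hd, hnormBA,
      inv_mul_cancel₀ hd.ne']
  have hu0 : u ≠ 0 := by intro hh; rw [hh] at hu; simp at hu
  -- construct an orthonormal partner `w`
  obtain ⟨m, hm, hm0⟩ : ∃ m ∈ (Submodule.span ℝ ({u} : Set V2))ᗮ, m ≠ 0 := by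
    apply Submodule.exists_mem_ne_zero_of_ne_bot
    intro hb
    have hh := Submodule.finrank_add_finrank_orthogonal (𝕜 := ℝ) (Submodule.span ℝ ({u} : Set V2))
    rw [finrank_span_singleton hu0, finrank_euclideanSpace, Fintype.card_fin, hb] at hh
    simp at hh
  set w : V2 := ‖m‖⁻¹ • m with hwdef
  have hw : ‖w‖ = 1 := by
    rw [hwdef, norm_smul, norm_inv, norm_norm, inv_mul_cancel₀ (norm_ne_zero_iff.2 hm0)]
  have huw : ⟪u, w⟫ = 0 := by
    have h0 : ⟪u, m⟫ = 0 :=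
      (Submodule.mem_orthogonal _ _).1 hm u (Submodule.mem_span_singleton_self u)
    rw [hwdef, inner_smul_right, h0, mul_zero]
  have hon : Orthonormal ℝ ![u, w] := by
    rw [orthonormal_iff_ite]
    intro i j
    fin_cases i <;> fin_cases j
    · rw [if_pos rfl]
      show ⟪u, u⟫ = (1:ℝ)
      rw [real_inner_self_eq_norm_sq, hu]; norm_num
    · rw [if_neg (by decide)]
      show ⟪u, w⟫ = (0:ℝ)
      exact huw
    · rw [if_neg (by decide)]
      show ⟪w, u⟫ = (0:ℝ)
      rw [real_inner_comm]; exact huw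
    · rw [if_pos rfl]
      show ⟪w, w⟫ = (1:ℝ)
      rw [real_inner_self_eq_norm_sq, hw]; norm_num
  have hsp : Submodule.span ℝ (Set.range ![u, w]) = ⊤ :=
    hon.linearIndependent.span_eq_top_of_card_eq_finrank
      (by simp [finrank_euclideanSpace])
  have hframe : Submodule.span ℝ ({u, w} : Set V2) = ⊤ := by
    rw [← hsp]
    congr 1
    simp [Matrix.range_cons, Matrix.range_empty, Set.pair_comm]
  have hbound : ∀ s₁ s₂ : ℝ, |s₁| = r₁ → |s₂| = r₂ → ((s₂ - s₁) / d) ^ 2 < 1 := by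
    intro s₁ s₂ h1 h2
    have h3 : |s₂ - s₁| ≤ r₁ + r₂ := by
      calc |s₂ - s₁| ≤ |s₂| + |s₁| := abs_sub _ _
        _ = r₁ + r₂ := by rw [h1, h2]; ring
    have h4 : |s₂ - s₁| < d := lt_of_le_of_lt h3 hsep
    rw [div_pow, div_lt_one (by positivity)]
    calc (s₂ - s₁) ^ 2 = |s₂ - s₁| ^ 2 := (sq_abs _).symm
      _ < d ^ 2 := by nlinarith [abs_nonneg (s₂ - s₁)]
  have ha1 : |r₁| = r₁ := abs_of_pos hr₁
  have ha1' : |(-r₁)| = r₁ := by rw [abs_neg]; exact ha1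
  have ha2 : |r₂| = r₂ := abs_of_pos hr₂
  have ha2' : |(-r₂)| = r₂ := by rw [abs_neg]; exact ha2
  have hset : {ℓ : AffineSubspace ℝ (EuclideanSpace ℝ (Fin 2)) |
        Module.finrank ℝ ℓ.direction = 1 ∧
        Metric.infDist A (ℓ : Set (EuclideanSpace ℝ (Fin 2))) = r₁ ∧
        Metric.infDist B (ℓ : Set (EuclideanSpace ℝ (Fin 2))) = r₂} =
      {tline A u w d r₁ r₂, tline A u w d r₁ (-r₂),
       tline A u w d (-r₁) r₂, tline A u w d (-r₁) (-r₂)} := by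
    apply Set.eq_of_subset_of_subset
    · rintro ℓ ⟨hfin, hA, hB⟩
      obtain ⟨n, c, hn1, rfl⟩ := exists_mkLine ℓ hfin
      rw [infDist_mkLine hn1] at hA hB
      rcases le_or_gt 0 ⟪w, n⟫ with hβ | hβ
      · have heq := mkLine_eq_tline hu hw huw hframe A B hd hBA c hn1 hβ
        have h1 := (abs_eq (le_of_lt hr₁)).1 hA
        have h2 := (abs_eq (le_of_lt hr₂)).1 hB
        rw [heq]
        rcases h1 with h1 | h1 <;> rcases h2 with h2 | h2 <;> rw [h1, h2] <;>
          simp [Set.mem_insert_iff]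
      · have hneg : mkLine n c = mkLine (-n) (-c) := (mkLine_neg n c).symm
        have hn1' : ‖(-n : V2)‖ = 1 := by rwa [norm_neg]
        have hβ' : (0:ℝ) ≤ ⟪w, -n⟫ := by rw [inner_neg_right]; linarith
        have heq := mkLine_eq_tline hu hw huw hframe A B hd hBA (-c) hn1' hβ'
        have e1 : ⟪(-n : V2), A⟫ - (-c) = -(⟪n, A⟫ - c) := by rw [inner_neg_left]; ring
        have e2 : ⟪(-n : V2), B⟫ - (-c) = -(⟪n, B⟫ - c) := by rw [inner_neg_left]; ring
        rw [hneg, heq, e1, e2]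
        have h1 := (abs_eq (le_of_lt hr₁)).1 hA
        have h2 := (abs_eq (le_of_lt hr₂)).1 hB
        rcases h1 with h1 | h1 <;> rcases h2 with h2 | h2 <;> rw [h1, h2] <;>
          simp [Set.mem_insert_iff]
    · have mem_of : ∀ s₁ s₂ : ℝ, |s₁| = r₁ → |s₂| = r₂ →
          tline A u w d s₁ s₂ ∈ {ℓ : AffineSubspace ℝ (EuclideanSpace ℝ (Fin 2)) |
            Module.finrank ℝ ℓ.direction = 1 ∧
            Metric.infDist A (ℓ : Set (EuclideanSpace ℝ (Fin 2))) = r₁ ∧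
            Metric.infDist B (ℓ : Set (EuclideanSpace ℝ (Fin 2))) = r₂} := by
        intro s₁ s₂ h1 h2
        obtain ⟨hf, hdA, hdB⟩ :=
          tline_spec A B hu hw huw hd hBA s₁ s₂ (le_of_lt (hbound _ _ h1 h2))
        exact ⟨hf, by rw [hdA, h1], by rw [hdB, h2]⟩
      rintro ℓ (rfl | rfl | rfl | rfl)
      · exact mem_of _ _ ha1 ha2
      · exact mem_of _ _ ha1 ha2'
      · exact mem_of _ _ ha1' ha2
      · exact mem_of _ _ ha1' ha2'
  rw [hset]
  have hinj : ∀ s₁ s₂ s₁' s₂' : ℝ, |s₁| = r₁ → |s₂| = r₂ → |s₁'| = r₁ → |s₂'| = r₂ →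
      tline A u w d s₁ s₂ = tline A u w d s₁' s₂' → s₁ = s₁' ∧ s₂ = s₂' := by
    intro s₁ s₂ s₁' s₂' h1 h2 h1' h2' h
    exact tline_inj hu hw huw A hd (hbound _ _ h1 h2) (hbound _ _ h1' h2') h
  have h12 : tline A u w d r₁ r₂ ≠ tline A u w d r₁ (-r₂) := by
    intro h
    have := (hinj _ _ _ _ ha1 ha2 ha1 ha2' h).2
    linarith
  have h13 : tline A u w d r₁ r₂ ≠ tline A u w d (-r₁) r₂ := by
    intro h
    have := (hinj _ _ _ _ ha1 ha2 ha1' ha2 h).1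
    linarith
  have h14 : tline A u w d r₁ r₂ ≠ tline A u w d (-r₁) (-r₂) := by
    intro h
    have := (hinj _ _ _ _ ha1 ha2 ha1' ha2' h).1
    linarith
  have h23 : tline A u w d r₁ (-r₂) ≠ tline A u w d (-r₁) r₂ := by
    intro h
    have := (hinj _ _ _ _ ha1 ha2' ha1' ha2 h).1
    linarith
  have h24 : tline A u w d r₁ (-r₂) ≠ tline A u w d (-r₁) (-r₂) := by
    intro h
    have := (hinj _ _ _ _ ha1 ha2' ha1' ha2' h).1
    linarith
  have h34 : tline A u w d (-r₁) r₂ ≠ tline A u w d (-r₁) (-r₂) := by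
    intro h
    have := (hinj _ _ _ _ ha1' ha2 ha1' ha2' h).2
    linarith
  have hfin2 : ({tline A u w d r₁ (-r₂), tline A u w d (-r₁) r₂,
      tline A u w d (-r₁) (-r₂)} : Set (AffineSubspace ℝ V2)).Finite :=
    (Set.finite_singleton _).insert _ |>.insert _
  refine ⟨hfin2.insert _, ?_⟩
  rw [Set.ncard_insert_of_notMem (by simp [h12, h13, h14]) hfin2,
    Set.ncard_insert_of_notMem (by simp [h23, h24]) ((Set.finite_singleton _).insert _),
    Set.ncard_pair h34]

end Main
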